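/- Let D ⊆ ℂ × ℂ be a nonempty open connected set, let D₁ := Prod.fst '' D and D₂ := Prod.snd '' D, and for an index type S let (g_s : D₁ → ℂ) and (h_s : D₂ → ℂ) be families of holomorphic functions; define F_s : D₁ × D₂ → ℂ × ℂ by F_s(w₁, w₂) = (g_s(w₁), h_s(w₂)). If the family of restrictions {F_s|_D} is normal on D, then the family {F_s} is normal on the (possibly larger) product domain D₁ × D₂. -/

import Mathlib

open Filter Metric Set Topology


/-- A family `F : ι → α → β` of functions is normal on a set `U` if every sequence in the
family has a subsequence converging uniformly on every compact subset of `U` to some limit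
function. -/
def NormalOn {α β ι : Type*} [TopologicalSpace α] [UniformSpace β]
    (F : ι → α → β) (U : Set α) : Prop :=
  ∀ u : ℕ → ι, ∃ φ : ℕ → ℕ, StrictMono φ ∧ ∃ f : α → β,
    ∀ K : Set α, K ⊆ U → IsCompact K →
      TendstoUniformlyOn (fun n => F (u (φ n))) f Filter.atTop K

/-- If a family of split-form bicomplex holomorphic functions is normal on a bicomplex domain
`D`, then it is normal on the larger 𝕋-cartesian domain
`D₁ × D₂ = (Prod.fst '' D) ×ˢ (Prod.snd '' D)`. -/
theorem stmt11 {S : Type*} (D : Set (ℂ × ℂ)) (hD : IsOpen D) (hconn : IsConnected D)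
    (g h : S → ℂ → ℂ)
    (hg : ∀ s, DifferentiableOn ℂ (g s) (Prod.fst '' D))
    (hh : ∀ s, DifferentiableOn ℂ (h s) (Prod.snd '' D))
    (hnormal : NormalOn (fun s => fun w : ℂ × ℂ => (g s w.1, h s w.2)) D) :
    NormalOn (fun s => fun w : ℂ × ℂ => (g s w.1, h s w.2))
      ((Prod.fst '' D) ×ˢ (Prod.snd '' D)) := by
  classical
  intro u
  obtain ⟨φ, hφ, f, hf⟩ := hnormal u
  set D₁ : Set ℂ := Prod.fst '' D with hD₁def
  set D₂ : Set ℂ := Prod.snd '' D with hD₂def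
  have hD₁ : IsOpen D₁ := isOpenMap_fst D hD
  have hD₂ : IsOpen D₂ := isOpenMap_snd D hD
  set G : ℂ → ℂ := fun z => limUnder atTop fun n => g (u (φ n)) z with hGdef
  set H : ℂ → ℂ := fun z => limUnder atTop fun n => h (u (φ n)) z with hHdef
  -- pointwise limits
  have hGpt : ∀ z ∈ D₁, Tendsto (fun n => g (u (φ n)) z) atTop (𝓝 (G z)) := by
    rintro z ⟨p, hp, rfl⟩
    have h1 := hf {p} (Set.singleton_subset_iff.2 hp) isCompact_singleton
    have h2 := h1.tendsto_at (Set.mem_singleton p)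
    have h3 : Tendsto (fun n => g (u (φ n)) p.1) atTop (𝓝 (f p).1) :=
      ((continuous_fst.tendsto (f p)).comp h2)
    have h4 : G p.1 = (f p).1 := h3.limUnder_eq
    rw [h4]; exact h3
  have hHpt : ∀ z ∈ D₂, Tendsto (fun n => h (u (φ n)) z) atTop (𝓝 (H z)) := by
    rintro z ⟨p, hp, rfl⟩
    have h1 := hf {p} (Set.singleton_subset_iff.2 hp) isCompact_singleton
    have h2 := h1.tendsto_at (Set.mem_singleton p)
    have h3 : Tendsto (fun n => h (u (φ n)) p.2) atTop (𝓝 (f p).2) :=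
      ((continuous_snd.tendsto (f p)).comp h2)
    have h4 : H p.2 = (f p).2 := h3.limUnder_eq
    rw [h4]; exact h3
  -- local uniform convergence of the first components on D₁
  have hGloc : TendstoLocallyUniformlyOn (fun n z => g (u (φ n)) z) G atTop D₁ := by
    intro V hV z hz
    obtain ⟨p, hp, rfl⟩ := hz
    obtain ⟨r, hr, hball⟩ := (Metric.nhds_basis_closedBall.mem_iff).1 (hD.mem_nhds hp)
    have hCsub : Metric.closedBall p.1 r ×ˢ ({p.2} : Set ℂ) ⊆ D := by
      rintro ⟨a, b⟩ ⟨ha, hb⟩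
      simp only [Set.mem_singleton_iff] at hb
      subst hb
      apply hball
      simp only [Metric.mem_closedBall] at ha ⊢
      rw [Prod.dist_eq]
      simp [ha, le_of_lt hr]
    have hCcomp : IsCompact (Metric.closedBall p.1 r ×ˢ ({p.2} : Set ℂ)) :=
      (isCompact_closedBall _ _).prod isCompact_singleton
    have huC := hf _ hCsub hCcomp
    have huC2 := huC.comp (fun z : ℂ => (z, p.2))
    have huC3 := uniformContinuous_fst.comp_tendstoUniformlyOn huC2
    have hsub2 : Metric.closedBall p.1 r ⊆ (fun z : ℂ => (z, p.2)) ⁻¹' (Metric.closedBall p.1 r ×ˢ ({p.2} : Set ℂ)) := by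
      intro a ha; exact ⟨ha, rfl⟩
    have huB : TendstoUniformlyOn (fun n z => g (u (φ n)) z)
        (fun z => (f (z, p.2)).1) atTop (Metric.closedBall p.1 r) := huC3.mono hsub2
    have huB' : TendstoUniformlyOn (fun n z => g (u (φ n)) z) G atTop
        (Metric.closedBall p.1 r) := by
      apply huB.congr_right
      intro z hz
      have hzD : (z, p.2) ∈ D := hCsub ⟨hz, rfl⟩
      have hzD₁ : z ∈ D₁ := ⟨(z, p.2), hzD, rfl⟩
      exact tendsto_nhds_unique (huB.tendsto_at hz) (hGpt z hzD₁)
    refine ⟨Metric.closedBall p.1 r, ?_, huB' V hV⟩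
    exact mem_nhdsWithin_of_mem_nhds (Metric.closedBall_mem_nhds _ hr)
  have hHloc : TendstoLocallyUniformlyOn (fun n z => h (u (φ n)) z) H atTop D₂ := by
    intro V hV z hz
    obtain ⟨p, hp, rfl⟩ := hz
    obtain ⟨r, hr, hball⟩ := (Metric.nhds_basis_closedBall.mem_iff).1 (hD.mem_nhds hp)
    have hCsub : ({p.1} : Set ℂ) ×ˢ Metric.closedBall p.2 r ⊆ D := by
      rintro ⟨a, b⟩ ⟨ha, hb⟩
      simp only [Set.mem_singleton_iff] at ha
      subst ha
      apply hball
      simp only [Metric.mem_closedBall] at hb ⊢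
      rw [Prod.dist_eq]
      simp [hb, le_of_lt hr]
    have hCcomp : IsCompact (({p.1} : Set ℂ) ×ˢ Metric.closedBall p.2 r) :=
      isCompact_singleton.prod (isCompact_closedBall _ _)
    have huC := hf _ hCsub hCcomp
    have huC2 := huC.comp (fun z : ℂ => (p.1, z))
    have huC3 := uniformContinuous_snd.comp_tendstoUniformlyOn huC2
    have hsub2 : Metric.closedBall p.2 r ⊆ (fun z : ℂ => (p.1, z)) ⁻¹' (({p.1} : Set ℂ) ×ˢ Metric.closedBall p.2 r) := by
      intro a ha; exact ⟨rfl, ha⟩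
    have huB : TendstoUniformlyOn (fun n z => h (u (φ n)) z)
        (fun z => (f (p.1, z)).2) atTop (Metric.closedBall p.2 r) := huC3.mono hsub2
    have huB' : TendstoUniformlyOn (fun n z => h (u (φ n)) z) H atTop
        (Metric.closedBall p.2 r) := by
      apply huB.congr_right
      intro z hz
      have hzD : (p.1, z) ∈ D := hCsub ⟨rfl, hz⟩
      have hzD₂ : z ∈ D₂ := ⟨(p.1, z), hzD, rfl⟩
      exact tendsto_nhds_unique (huB.tendsto_at hz) (hHpt z hzD₂)
    refine ⟨Metric.closedBall p.2 r, ?_, huB' V hV⟩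
    exact mem_nhdsWithin_of_mem_nhds (Metric.closedBall_mem_nhds _ hr)
  have hGcpt := (tendstoLocallyUniformlyOn_iff_forall_isCompact hD₁).1 hGloc
  have hHcpt := (tendstoLocallyUniformlyOn_iff_forall_isCompact hD₂).1 hHloc
  refine ⟨φ, hφ, fun w => (G w.1, H w.2), ?_⟩
  intro K hK hKc
  have hK₁ : Prod.fst '' K ⊆ D₁ := by rintro _ ⟨p, hp, rfl⟩; exact (hK hp).1
  have hK₂ : Prod.snd '' K ⊆ D₂ := by rintro _ ⟨p, hp, rfl⟩; exact (hK hp).2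
  have hG := hGcpt (Prod.fst '' K) hK₁ (hKc.image continuous_fst)
  have hH := hHcpt (Prod.snd '' K) hK₂ (hKc.image continuous_snd)
  have hprod := hG.prodMap hH
  have hdiag : Tendsto (fun n : ℕ => (n, n)) atTop (atTop ×ˢ atTop) :=
    tendsto_id.prodMk tendsto_id
  intro U hU
  have hev := hprod U hU
  have hev2 := hdiag.eventually hev
  filter_upwards [hev2] with n hn
  intro x hx
  exact hn x ⟨⟨x, hx, rfl⟩, ⟨x, hx, rfl⟩⟩
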